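/- Let a, b, c be real numbers with a·b = 2c. Then there is an isomorphism of ℝ-algebras ℝ[x₁,x₂,y]/(x₁², x₂², y² + (a·x₁ + b·x₂)·y + c·x₁·x₂) ≅ ℝ[u₁,u₂,u₃]/(u₁², u₂², u₃²). -/

import Mathlib

open MvPolynomial

noncomputable def sbF (a b : ℝ) : MvPolynomial (Fin 3) ℝ →ₐ[ℝ] MvPolynomial (Fin 3) ℝ :=
  aeval ![X 0, X 1, X 2 - C (a/2) * X 0 - C (b/2) * X 1]

noncomputable def sbG (a b : ℝ) : MvPolynomial (Fin 3) ℝ →ₐ[ℝ] MvPolynomial (Fin 3) ℝ :=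
  aeval ![X 0, X 1, X 2 + C (a/2) * X 0 + C (b/2) * X 1]

noncomputable def sbE (a b : ℝ) : MvPolynomial (Fin 3) ℝ ≃ₐ[ℝ] MvPolynomial (Fin 3) ℝ :=
  AlgEquiv.ofAlgHom (sbF a b) (sbG a b)
    (by ext i; fin_cases i <;> simp [sbF, sbG] <;> ring)
    (by ext i; fin_cases i <;> simp [sbF, sbG] <;> ring)

lemma sbE_0 (a b : ℝ) : sbE a b (X 0) = X 0 := by simp [sbE, sbF]

lemma sbE_1 (a b : ℝ) : sbE a b (X 1) = X 1 := by simp [sbE, sbF]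

lemma sbE_2 (a b : ℝ) :
    sbE a b (X 2) = X 2 - C (a/2) * X 0 - C (b/2) * X 1 := by
  simp [sbE, sbF]

lemma sbE_C (a b r : ℝ) : sbE a b (C r) = C r := by
  simp [sbE, sbF, algebraMap_eq]

lemma C_half_two (r : ℝ) :
    (C (r/2) : MvPolynomial (Fin 3) ℝ) * 2 = C r := by
  rw [show (2 : MvPolynomial (Fin 3) ℝ) = C 2 from (map_ofNat C 2).symm, ← map_mul]
  norm_num

lemma sbE_rel (a b c : ℝ) (h : a * b = 2 * c) :
    sbE a b ((X 2 : MvPolynomial (Fin 3) ℝ) ^ 2 + (C a * X 0 + C b * X 1) * X 2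
        + C c * (X 0 * X 1)) =
      X 2 ^ 2 - C (a/2) * C (a/2) * X 0 ^ 2 - C (b/2) * C (b/2) * X 1 ^ 2 := by
  have hc : (C c : MvPolynomial (Fin 3) ℝ) = C (a/2) * C b := by
    rw [← map_mul]; congr 1; linarith
  simp only [map_add, map_mul, map_pow, sbE_0, sbE_1, sbE_2, sbE_C, hc]
  linear_combination (C (a/2) * X 0 ^ 2 + C (b/2) * X 0 * X 1 - X 2 * X 0) * C_half_two a +
    (C (b/2) * X 1 ^ 2 - X 2 * X 1) * C_half_two b

/-- If `ab = 2c`, then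
`ℝ[x₁,x₂,y]/(x₁², x₂², y² + (a·x₁ + b·x₂)·y + c·x₁·x₂) ≅ ℝ[u₁,u₂,u₃]/(u₁², u₂², u₃²)`
as ℝ-algebras. -/
theorem s2_bundle_over_s2_times_s2_cohomology_iso (a b c : ℝ) (h : a * b = 2 * c) :
    Nonempty
      ((MvPolynomial (Fin 3) ℝ ⧸
          Ideal.span {(X 0 : MvPolynomial (Fin 3) ℝ) ^ 2, X 1 ^ 2,
            X 2 ^ 2 + (C a * X 0 + C b * X 1) * X 2 + C c * (X 0 * X 1)}) ≃ₐ[ℝ]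
        (MvPolynomial (Fin 3) ℝ ⧸
          Ideal.span {(X 0 : MvPolynomial (Fin 3) ℝ) ^ 2, X 1 ^ 2, X 2 ^ 2})) := by
  refine ⟨Ideal.quotientEquivAlg _ _ (sbE a b) ?_⟩
  rw [Ideal.map_span, Set.image_insert_eq, Set.image_insert_eq, Set.image_singleton]
  have e0 : ((sbE a b : MvPolynomial (Fin 3) ℝ →+* MvPolynomial (Fin 3) ℝ))
      ((X 0 : MvPolynomial (Fin 3) ℝ) ^ 2) = X 0 ^ 2 := by
    show sbE a b _ = _; rw [map_pow, sbE_0]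
  have e1 : ((sbE a b : MvPolynomial (Fin 3) ℝ →+* MvPolynomial (Fin 3) ℝ))
      ((X 1 : MvPolynomial (Fin 3) ℝ) ^ 2) = X 1 ^ 2 := by
    show sbE a b _ = _; rw [map_pow, sbE_1]
  have e2 : ((sbE a b : MvPolynomial (Fin 3) ℝ →+* MvPolynomial (Fin 3) ℝ))
      ((X 2 : MvPolynomial (Fin 3) ℝ) ^ 2 + (C a * X 0 + C b * X 1) * X 2
        + C c * (X 0 * X 1)) =
      X 2 ^ 2 - C (a/2) * C (a/2) * X 0 ^ 2 - C (b/2) * C (b/2) * X 1 ^ 2 :=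
    sbE_rel a b c h
  rw [e0, e1, e2]
  set A := (C (a/2) : MvPolynomial (Fin 3) ℝ) with hA
  set B := (C (b/2) : MvPolynomial (Fin 3) ℝ) with hB
  apply le_antisymm <;> rw [Ideal.span_le, Set.insert_subset_iff, Set.insert_subset_iff,
    Set.singleton_subset_iff]
  · refine ⟨Ideal.subset_span (Set.mem_insert _ _),
      Ideal.subset_span (Set.mem_insert_of_mem _ (Set.mem_insert _ _)), ?_⟩
    show (X 2 : MvPolynomial (Fin 3) ℝ) ^ 2 ∈ _
    have h0 : (X 0 : MvPolynomial (Fin 3) ℝ) ^ 2 ∈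
        Ideal.span {(X 0 : MvPolynomial (Fin 3) ℝ) ^ 2, X 1 ^ 2,
          X 2 ^ 2 - A * A * X 0 ^ 2 - B * B * X 1 ^ 2} :=
      Ideal.subset_span (Set.mem_insert _ _)
    have h1 : (X 1 : MvPolynomial (Fin 3) ℝ) ^ 2 ∈
        Ideal.span {(X 0 : MvPolynomial (Fin 3) ℝ) ^ 2, X 1 ^ 2,
          X 2 ^ 2 - A * A * X 0 ^ 2 - B * B * X 1 ^ 2} :=
      Ideal.subset_span (Set.mem_insert_of_mem _ (Set.mem_insert _ _))
    have h2 : (X 2 : MvPolynomial (Fin 3) ℝ) ^ 2 - A * A * X 0 ^ 2 - B * B * X 1 ^ 2 ∈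
        Ideal.span {(X 0 : MvPolynomial (Fin 3) ℝ) ^ 2, X 1 ^ 2,
          X 2 ^ 2 - A * A * X 0 ^ 2 - B * B * X 1 ^ 2} :=
      Ideal.subset_span (Set.mem_insert_of_mem _ (Set.mem_insert_of_mem _ rfl))
    have hmem := Ideal.add_mem _ (Ideal.add_mem _ h2 (Ideal.mul_mem_left _ (A * A) h0))
      (Ideal.mul_mem_left _ (B * B) h1)
    rw [SetLike.mem_coe]
    convert hmem using 1
    ring
  · refine ⟨Ideal.subset_span (Set.mem_insert _ _),
      Ideal.subset_span (Set.mem_insert_of_mem _ (Set.mem_insert _ _)), ?_⟩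
    show (X 2 : MvPolynomial (Fin 3) ℝ) ^ 2 - A * A * X 0 ^ 2 - B * B * X 1 ^ 2 ∈ _
    have h0 : (X 0 : MvPolynomial (Fin 3) ℝ) ^ 2 ∈
        Ideal.span {(X 0 : MvPolynomial (Fin 3) ℝ) ^ 2, X 1 ^ 2, X 2 ^ 2} :=
      Ideal.subset_span (Set.mem_insert _ _)
    have h1 : (X 1 : MvPolynomial (Fin 3) ℝ) ^ 2 ∈
        Ideal.span {(X 0 : MvPolynomial (Fin 3) ℝ) ^ 2, X 1 ^ 2, X 2 ^ 2} :=
      Ideal.subset_span (Set.mem_insert_of_mem _ (Set.mem_insert _ _))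
    have h2 : (X 2 : MvPolynomial (Fin 3) ℝ) ^ 2 ∈
        Ideal.span {(X 0 : MvPolynomial (Fin 3) ℝ) ^ 2, X 1 ^ 2, X 2 ^ 2} :=
      Ideal.subset_span (Set.mem_insert_of_mem _ (Set.mem_insert_of_mem _ rfl))
    exact Ideal.sub_mem _ (Ideal.sub_mem _ h2 (Ideal.mul_mem_left _ (A * A) h0))
      (Ideal.mul_mem_left _ (B * B) h1)
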